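/- Every nonempty rich word w can be extended on the left: there exists a letter y such that yw is rich. -/

import Mathlib

def Rich {A : Type*} (w : List A) : Prop :=
  {p : List A | p.reverse = p ∧ p <:+: w}.ncard = w.length + 1

namespace RichAux

open List

variable {A : Type*}

def PalSet (w : List A) : Set (List A) := {p : List A | p.reverse = p ∧ p <:+: w}

lemma rich_iff (w : List A) : Rich w ↔ (PalSet w).ncard = w.length + 1 := Iff.rfl

lemma palset_finite (w : List A) : (PalSet w).Finite := by
  classical
  apply Set.Finite.subset (w.sublists.toFinset : Finset (List A)).finite_toSet
  intro p hp
  simp only [Finset.mem_coe, List.mem_toFinset, List.mem_sublists]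
  exact hp.2.sublist

lemma palset_mono {w₁ w₂ : List A} (h : w₁ <:+: w₂) : PalSet w₁ ⊆ PalSet w₂ :=
  fun _ hp => ⟨hp.1, hp.2.trans h⟩

lemma new_isPrefix {y : A} {w p : List A} (hp : p <:+: y :: w) (hnot : ¬ p <:+: w) :
    p <+: y :: w := by
  obtain ⟨s, t, hst⟩ := hp
  cases s with
  | nil => exact ⟨t, by simpa using hst⟩
  | cons a s' =>
    exfalso
    apply hnot
    simp only [cons_append, cons.injEq] at hst
    exact ⟨s', t, hst.2⟩

lemma new_subsingleton (y : A) (w : List A) :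
    (PalSet (y :: w) \ PalSet w).Subsingleton := by
  have key : ∀ p₁ p₂, p₁ ∈ PalSet (y :: w) \ PalSet w → p₂ ∈ PalSet (y :: w) \ PalSet w →
      p₁.length ≤ p₂.length → p₁ = p₂ := by
    intro p₁ p₂ h₁ h₂ hlen
    have hP₁ : p₁ <+: y :: w := new_isPrefix h₁.1.2 (fun h => h₁.2 ⟨h₁.1.1, h⟩)
    have hP₂ : p₂ <+: y :: w := new_isPrefix h₂.1.2 (fun h => h₂.2 ⟨h₂.1.1, h⟩)
    have hpre : p₁ <+: p₂ := prefix_of_prefix_length_le hP₁ hP₂ hlen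
    rcases eq_or_lt_of_le hlen with heq | hlt
    · exact hpre.eq_of_length heq
    · exfalso
      have hsuf : p₁ <:+ p₂ := by
        have := reverse_suffix.2 hpre
        rwa [h₁.1.1, h₂.1.1] at this
      obtain ⟨b, p₂', rfl⟩ : ∃ b p₂', p₂ = b :: p₂' := by
        cases p₂ with
        | nil => simp at hlt
        | cons b p₂' => exact ⟨b, p₂', rfl⟩
      obtain ⟨rfl, hP₂'⟩ := cons_prefix_cons.1 hP₂
      rcases suffix_cons_iff.1 hsuf with rfl | hsuf'
      · simp at hlt
      · exact h₁.2 ⟨h₁.1.1, (hsuf'.isInfix).trans hP₂'.isInfix⟩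
  intro p₁ h₁ p₂ h₂
  rcases le_total p₁.length p₂.length with h | h
  · exact key p₁ p₂ h₁ h₂ h
  · exact (key p₂ p₁ h₂ h₁ h).symm

lemma ncard_step (y : A) (w : List A) :
    (PalSet (y :: w)).ncard ≤ (PalSet w).ncard + 1 := by
  have hsub : PalSet (y :: w) ⊆ PalSet w ∪ (PalSet (y :: w) \ PalSet w) := by
    intro p hp
    by_cases h : p ∈ PalSet w
    · exact Or.inl h
    · exact Or.inr ⟨hp, h⟩
  have hfin : (PalSet (y :: w) \ PalSet w).Finite := (palset_finite (y :: w)).diff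
  have h1 : (PalSet (y :: w)).ncard ≤
      (PalSet w ∪ (PalSet (y :: w) \ PalSet w)).ncard :=
    Set.ncard_le_ncard hsub ((palset_finite w).union hfin)
  have h2 := Set.ncard_union_le (PalSet w) (PalSet (y :: w) \ PalSet w)
  have h3 : (PalSet (y :: w) \ PalSet w).ncard ≤ 1 := by
    rcases (new_subsingleton y w).eq_empty_or_singleton with h | ⟨a, h⟩ <;> simp [h]
  omega

lemma ncard_le (w : List A) : (PalSet w).ncard ≤ w.length + 1 := by
  induction w with
  | nil =>
    have : PalSet ([] : List A) = {([] : List A)} := by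
      ext p
      simp only [PalSet, Set.mem_setOf_eq, infix_nil, Set.mem_singleton_iff]
      exact ⟨fun h => h.2, fun h => by subst h; simp⟩
    rw [this]
    simp
  | cons y w ih =>
    have := ncard_step y w
    simp only [length_cons]
    omega

lemma rich_of_cons {y : A} {w : List A} (h : Rich (y :: w)) : Rich w := by
  have h1 := ncard_step y w
  have h2 := ncard_le w
  rw [rich_iff] at h ⊢
  simp only [length_cons] at h
  omega

lemma rich_suffix {s w : List A} (h : s <:+ w) (hw : Rich w) : Rich s := by
  induction w with
  | nil => rw [suffix_nil] at h; subst h; exact hw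
  | cons y w ih =>
    rcases suffix_cons_iff.1 h with rfl | h'
    · exact hw
    · exact ih h' (rich_of_cons hw)

lemma palset_reverse (w : List A) : PalSet w.reverse = PalSet w := by
  ext p
  simp only [PalSet, Set.mem_setOf_eq]
  constructor
  · rintro ⟨hp, hi⟩
    refine ⟨hp, ?_⟩
    have h2 : p.reverse <:+: w.reverse.reverse := reverse_infix.2 hi
    rwa [hp, reverse_reverse] at h2
  · rintro ⟨hp, hi⟩
    refine ⟨hp, ?_⟩
    have h2 : p.reverse <:+: w.reverse := reverse_infix.2 hi
    rwa [hp] at h2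

lemma rich_reverse {w : List A} (h : Rich w) : Rich w.reverse := by
  rw [rich_iff, palset_reverse, length_reverse]
  exact h

lemma rich_prefix {p w : List A} (h : p <+: w) (hw : Rich w) : Rich p := by
  have h1 : p.reverse <:+ w.reverse := reverse_suffix.2 h
  have h2 : Rich p.reverse := rich_suffix h1 (rich_reverse hw)
  have h3 := rich_reverse h2
  rwa [reverse_reverse] at h3

lemma exists_max_pal_prefix (w : List A) :
    ∃ q : List A, q.reverse = q ∧ q <+: w ∧
      ∀ r : List A, r.reverse = r → r <+: w → r.length ≤ q.length := by
  classical
  let F : Finset (List A) := w.inits.toFinset.filter (fun p => p.reverse = p)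
  have hne : F.Nonempty := ⟨[], by simp [F, List.mem_inits]⟩
  obtain ⟨q, hqF, hmax⟩ := F.exists_max_image List.length hne
  simp only [F, Finset.mem_filter, List.mem_toFinset, List.mem_inits] at hqF
  refine ⟨q, hqF.2, hqF.1, fun r hr hrw => hmax r ?_⟩
  simp only [F, Finset.mem_filter, List.mem_toFinset, List.mem_inits]
  exact ⟨hrw, hr⟩

lemma exists_max_proper_pal_prefix (w : List A) (hne : w ≠ []) :
    ∃ v : List A, v.reverse = v ∧ v <+: w ∧ v.length < w.length ∧
      ∀ r : List A, r.reverse = r → r <+: w → r.length < w.length →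
        r.length ≤ v.length := by
  classical
  let F : Finset (List A) :=
    w.inits.toFinset.filter (fun p => p.reverse = p ∧ p.length < w.length)
  have hwl : 0 < w.length := length_pos_iff.2 hne
  have hFne : F.Nonempty := ⟨[], by simp [F, List.mem_inits, hwl]⟩
  obtain ⟨v, hvF, hmax⟩ := F.exists_max_image List.length hFne
  simp only [F, Finset.mem_filter, List.mem_toFinset, List.mem_inits] at hvF
  refine ⟨v, hvF.2.1, hvF.1, hvF.2.2, fun r hr hrw hrl => hmax r ?_⟩
  simp only [F, Finset.mem_filter, List.mem_toFinset, List.mem_inits]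
  exact ⟨hrw, hr, hrl⟩

lemma max_pal_prefix_not_infix_tail {w q : List A} (hw : Rich w) (hne : w ≠ [])
    (hpal : q.reverse = q) (hpre : q <+: w)
    (hmax : ∀ r : List A, r.reverse = r → r <+: w → r.length ≤ q.length) :
    ¬ q <:+: w.tail := by
  intro hq
  obtain ⟨y, w', rfl⟩ := exists_cons_of_ne_nil hne
  simp only [tail_cons] at hq
  have hsub : PalSet (y :: w') ⊆ PalSet w' := by
    rintro p ⟨hp, hi⟩
    refine ⟨hp, ?_⟩
    obtain ⟨s, t, hst⟩ := hi
    cases s with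
    | cons a s' =>
      simp only [cons_append, cons.injEq] at hst
      exact ⟨s', t, hst.2⟩
    | nil =>
      have hppre : p <+: y :: w' := ⟨t, by simpa using hst⟩
      have hlen := hmax p hp hppre
      have hpq : p <+: q := prefix_of_prefix_length_le hppre hpre hlen
      have hsq : p <:+ q := by
        have := reverse_suffix.2 hpq
        rwa [hp, hpal] at this
      exact hsq.isInfix.trans hq
  have h1 : (PalSet (y :: w')).ncard ≤ (PalSet w').ncard :=
    Set.ncard_le_ncard hsub (palset_finite _)
  have h2 := ncard_le w'
  have hw' : (PalSet (y :: w')).ncard = (y :: w').length + 1 := hw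
  simp only [length_cons] at hw'
  omega

lemma rich_cons_of_new {w : List A} {y : A} {p : List A} (hw : Rich w)
    (hpal : p.reverse = p) (hpre : p <+: y :: w) (hnot : ¬ p <:+: w) :
    Rich (y :: w) := by
  have hstep := ncard_step y w
  have hin : insert p (PalSet w) ⊆ PalSet (y :: w) := by
    rintro r hr
    rcases Set.mem_insert_iff.1 hr with rfl | hr'
    · exact ⟨hpal, hpre.isInfix⟩
    · exact palset_mono ((suffix_cons y w).isInfix) hr'
  have hcard : (insert p (PalSet w)).ncard = (PalSet w).ncard + 1 :=
    Set.ncard_insert_of_notMem (fun h => hnot h.2) (palset_finite w)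
  have h1 : (PalSet w).ncard + 1 ≤ (PalSet (y :: w)).ncard := by
    rw [← hcard]
    exact Set.ncard_le_ncard hin (palset_finite _)
  have hw' : (PalSet w).ncard = w.length + 1 := hw
  rw [rich_iff]
  simp only [length_cons]
  omega

lemma prefix_cons_self {v : List A} {x : A} (h : v <+: x :: v) :
    v = replicate v.length x := by
  induction v with
  | nil => simp
  | cons a v' ih =>
    obtain ⟨rfl, h'⟩ := cons_prefix_cons.1 h
    have := ih h'
    rw [show (a :: v').length = v'.length + 1 from rfl, replicate_succ]
    exact congrArg _ this

end RichAux

theorem stmt7 {A : Type*} [Fintype A] (w : List A) (hw : Rich w) (hne : w ≠ []) :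
    ∃ y : A, Rich (y :: w) := by
  open List RichAux in
  obtain ⟨q, hqpal, hqpre, hqmax⟩ := exists_max_pal_prefix w
  have hquni : ¬ q <:+: w.tail :=
    max_pal_prefix_not_infix_tail hw hne hqpal hqpre hqmax
  by_cases hqw : q = w
  · -- w is a palindrome
    have hwpal : w.reverse = w := by rw [← hqw]; exact hqpal
    obtain ⟨v, hvpal, hvpre, hvlt, hvmax⟩ := exists_max_proper_pal_prefix w hne
    obtain ⟨r, hr⟩ := id hvpre
    have hrne : r ≠ [] := by
      intro h
      subst h
      simp only [append_nil] at hr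
      rw [hr] at hvlt
      omega
    obtain ⟨x, t, rfl⟩ := List.exists_cons_of_ne_nil hrne
    set p : List A := x :: (v ++ [x]) with hpdef
    have hppal : p.reverse = p := by
      simp [hpdef, List.reverse_append, hvpal]
    have hplen : p.length = v.length + 2 := by simp [hpdef]
    have hppre : p <+: x :: w := by
      refine ⟨t, ?_⟩
      rw [← hr]
      simp [hpdef]
    refine ⟨x, rich_cons_of_new hw hppal hppre ?_⟩
    rintro ⟨s, t₂, hst⟩
    cases t₂ with
    | nil =>
      -- p is a suffix of w, hence (w palindrome) a prefix of w
      have hsuf : p <:+ w := ⟨s, by simpa using hst⟩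
      have hpprew : p <+: w := by
        have := List.reverse_prefix.2 hsuf
        rwa [hppal, hwpal] at this
      rcases lt_or_eq_of_le hpprew.length_le with hlt | heq
      · have := hvmax p hppal hpprew hlt
        omega
      · have hpw : p = w := hpprew.eq_of_length heq
        have hxv : (x :: v) <+: w := by
          rw [← hpw]
          exact ⟨[x], by simp [hpdef]⟩
        have hvxv : v <+: x :: v :=
          List.prefix_of_prefix_length_le hvpre hxv (by simp)
        have hrep : v = List.replicate v.length x := prefix_cons_self hvxv
        have hbig : (List.replicate (v.length + 1) x) <+: w := by
          rw [← hpw]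
          refine ⟨[x], ?_⟩
          rw [List.replicate_succ]
          simp [hpdef, ← hrep]
        have hbiglen : (List.replicate (v.length + 1) x).length < w.length := by
          rw [← hpw]
          simp [hplen]
        have := hvmax _ List.reverse_replicate hbig hbiglen
        simp only [List.length_replicate] at this
        omega
    | cons c t₂' =>
      -- internal occurrence : consider the prefix P = s ++ p of w
      set P : List A := s ++ p with hPdef
      have hPpre : P <+: w := ⟨c :: t₂', hst⟩
      have hPlen : P.length = s.length + v.length + 2 := by
        simp only [hPdef, length_append, hplen]
        omega
      have hPltw : P.length < w.length := by
        have := congrArg List.length hst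
        simp [hPdef] at this ⊢
        omega
      have hPrich : Rich P := rich_prefix hPpre hw
      have hPne : P ≠ [] := by simp [hPdef, hpdef]
      obtain ⟨q', hq'pal, hq'pre, hq'max⟩ := exists_max_pal_prefix P
      have hq'uni := max_pal_prefix_not_infix_tail hPrich hPne hq'pal hq'pre hq'max
      have hvP : v <+: P :=
        List.prefix_of_prefix_length_le hvpre hPpre (by omega)
      have h1 : q'.length ≤ v.length := by
        refine hvmax q' hq'pal (hq'pre.trans hPpre) ?_
        calc q'.length ≤ P.length := hq'pre.length_le
          _ < w.length := hPltw
      have h2 : v.length ≤ q'.length := hq'max v hvpal hvP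
      have hq'v : q' = v :=
        (List.prefix_of_prefix_length_le hq'pre hvP h1).eq_of_length (by omega)
      apply hq'uni
      rw [hq'v]
      cases s with
      | nil =>
        have : P.tail = v ++ [x] := by simp [hPdef, hpdef]
        rw [this]
        exact ⟨[], [x], by simp⟩
      | cons a s' =>
        have : P.tail = s' ++ p := by simp [hPdef]
        rw [this]
        exact ⟨s' ++ [x], [x], by simp [hpdef]⟩
  · -- w is not a palindrome : q is a proper prefix
    have hqlt : q.length < w.length :=
      lt_of_le_of_ne hqpre.length_le (fun h => hqw (hqpre.eq_of_length h))
    obtain ⟨r, hr⟩ := id hqpre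
    have hrne : r ≠ [] := by
      intro h
      subst h
      simp only [append_nil] at hr
      rw [hr] at hqlt
      omega
    obtain ⟨x, t, rfl⟩ := List.exists_cons_of_ne_nil hrne
    set p : List A := x :: (q ++ [x]) with hpdef
    have hppal : p.reverse = p := by
      simp [hpdef, List.reverse_append, hqpal]
    have hppre : p <+: x :: w := by
      refine ⟨t, ?_⟩
      rw [← hr]
      simp [hpdef]
    refine ⟨x, rich_cons_of_new hw hppal hppre ?_⟩
    rintro ⟨s, t₂, hst⟩
    apply hquni
    cases s with
    | nil =>
      rw [← hst]
      simp only [nil_append]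
      have : (p ++ t₂).tail = (q ++ [x]) ++ t₂ := by simp [hpdef]
      rw [this]
      exact ⟨[], [x] ++ t₂, by simp⟩
    | cons a s' =>
      rw [← hst]
      have : ((a :: s') ++ p ++ t₂).tail = s' ++ p ++ t₂ := by simp
      rw [this]
      exact ⟨s' ++ [x], [x] ++ t₂, by simp [hpdef]⟩
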